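/- Let γ > 1 and 0 < r₀ < r₁. Then there exists a constant C > 0 such that for all ρ, ρ̃ ∈ [r₀, r₁], all u, ũ ∈ ℝ, and all s > 0: −s·p(ρ|ρ̃)/(γ−1) + (ρ^γ − ρ̃^γ)(u − ũ) ≤ −(s/2)·γρ̃^{γ−2}·[(ρ − ρ̃) − (ρ̃/s)(u − ũ)]² + (γρ̃^γ/(2s))·(u − ũ)² + C|ρ − ρ̃|²|u − ũ| + C·s·|ρ − ρ̃|³, where p(ρ|ρ̃) := ρ^γ − ρ̃^γ − γρ̃^{γ−1}(ρ − ρ̃). -/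

import Mathlib

open Set

private lemma rpow_le_max_aux {r₀ r₁ : ℝ} (h₀ : 0 < r₀) (e : ℝ) {τ : ℝ}
    (hτ : τ ∈ Set.Icc r₀ r₁) : τ ^ e ≤ max (r₀ ^ e) (r₁ ^ e) := by
  rcases le_or_gt 0 e with he | he
  · exact le_max_of_le_right (Real.rpow_le_rpow (by linarith [hτ.1]) hτ.2 he)
  · exact le_max_of_le_left (Real.rpow_le_rpow_of_nonpos h₀ hτ.1 he.le)

private lemma taylor2_aux (γ r₀ r₁ : ℝ) (hγ : 1 < γ) (h₀ : 0 < r₀) :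
    ∃ M : ℝ, 0 ≤ M ∧ ∀ x y : ℝ, x ∈ Set.Icc r₀ r₁ → y ∈ Set.Icc r₀ r₁ →
      |x ^ γ - y ^ γ - γ * y ^ (γ - 1) * (x - y) - γ * (γ - 1) / 2 * y ^ (γ - 2) * (x - y) ^ 2|
        ≤ M * |x - y| ^ 3 := by
  set A : ℝ := max (r₀ ^ (γ - 3)) (r₁ ^ (γ - 3)) with hAdef
  have hA : 0 ≤ A := le_trans (Real.rpow_pos_of_pos h₀ (γ - 3)).le (le_max_left _ _)
  have hγγ : 0 < γ * (γ - 1) := by nlinarith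
  refine ⟨γ * (γ - 1) * |γ - 2| * A, by positivity, ?_⟩
  set M : ℝ := γ * (γ - 1) * |γ - 2| * A with hMdef
  have hM : 0 ≤ M := by positivity
  clear_value A M
  -- Step 1: Lipschitz bound for τ ↦ γ(γ-1)τ^(γ-2)
  have step1 : ∀ t ∈ Set.Icc r₀ r₁, ∀ y ∈ Set.Icc r₀ r₁,
      |γ * (γ - 1) * t ^ (γ - 2) - γ * (γ - 1) * y ^ (γ - 2)| ≤ M * |t - y| := by
    intro t ht y hy
    have hder : ∀ τ ∈ Set.Icc r₀ r₁,
        HasDerivWithinAt (fun τ : ℝ => γ * (γ - 1) * τ ^ (γ - 2))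
          ((fun τ : ℝ => γ * (γ - 1) * ((γ - 2) * τ ^ (γ - 3))) τ) (Set.Icc r₀ r₁) τ := by
      intro τ hτ
      have h0 : τ ≠ 0 := ne_of_gt (lt_of_lt_of_le h₀ hτ.1)
      have h := ((Real.hasDerivAt_rpow_const (p := γ - 2) (Or.inl h0)).const_mul
        (γ * (γ - 1))).hasDerivWithinAt (s := Set.Icc r₀ r₁)
      rw [show γ - 2 - 1 = γ - 3 by ring] at h
      exact h
    have hbound : ∀ τ ∈ Set.Icc r₀ r₁,
        ‖(fun τ : ℝ => γ * (γ - 1) * ((γ - 2) * τ ^ (γ - 3))) τ‖ ≤ M := by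
      intro τ hτ
      have h1 : τ ^ (γ - 3) ≤ A := by rw [hAdef]; exact rpow_le_max_aux h₀ (γ - 3) hτ
      have h2 : (0:ℝ) ≤ τ ^ (γ - 3) := Real.rpow_nonneg (by linarith [hτ.1]) _
      rw [Real.norm_eq_abs, abs_mul, abs_mul, abs_mul, abs_of_nonneg h2,
        abs_of_pos (show (0:ℝ) < γ by linarith), abs_of_pos (show (0:ℝ) < γ - 1 by linarith)]
      have h3 : (0:ℝ) ≤ |γ - 2| := abs_nonneg _
      rw [hMdef]
      linarith [mul_nonneg (mul_nonneg hγγ.le h3) (sub_nonneg.mpr h1)]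
    have := (convex_Icc r₀ r₁).norm_image_sub_le_of_norm_hasDerivWithin_le hder hbound hy ht
    simpa [Real.norm_eq_abs] using this
  -- Step 2: first-order Taylor for τ ↦ γτ^(γ-1)
  have step2 : ∀ t ∈ Set.Icc r₀ r₁, ∀ y ∈ Set.Icc r₀ r₁,
      |γ * t ^ (γ - 1) - γ * y ^ (γ - 1) - γ * (γ - 1) * y ^ (γ - 2) * (t - y)|
        ≤ M * |t - y| ^ 2 := by
    intro t ht y hy
    have hsub : Set.uIcc y t ⊆ Set.Icc r₀ r₁ := Set.uIcc_subset_Icc hy ht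
    have hder : ∀ τ ∈ Set.uIcc y t,
        HasDerivWithinAt (fun τ : ℝ => γ * τ ^ (γ - 1) - γ * (γ - 1) * y ^ (γ - 2) * τ)
          ((fun τ : ℝ => γ * ((γ - 1) * τ ^ (γ - 2)) - γ * (γ - 1) * y ^ (γ - 2)) τ)
          (Set.uIcc y t) τ := by
      intro τ hτ
      have h0 : τ ≠ 0 := ne_of_gt (lt_of_lt_of_le h₀ (hsub hτ).1)
      have h1 := ((Real.hasDerivAt_rpow_const (p := γ - 1) (Or.inl h0)).const_mul γ)
      have h2 := (hasDerivAt_id τ).const_mul (γ * (γ - 1) * y ^ (γ - 2))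
      have h := (h1.sub h2).hasDerivWithinAt (s := Set.uIcc y t)
      rw [show γ - 1 - 1 = γ - 2 by ring] at h
      simpa [Pi.sub_def] using h
    have hbound : ∀ τ ∈ Set.uIcc y t,
        ‖(fun τ : ℝ => γ * ((γ - 1) * τ ^ (γ - 2)) - γ * (γ - 1) * y ^ (γ - 2)) τ‖
          ≤ M * |t - y| := by
      intro τ hτ
      have h1 := step1 τ (hsub hτ) y hy
      have h2 : |τ - y| ≤ |t - y| := abs_sub_left_of_mem_uIcc hτ
      rw [Real.norm_eq_abs]
      calc |γ * ((γ - 1) * τ ^ (γ - 2)) - γ * (γ - 1) * y ^ (γ - 2)|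
          = |γ * (γ - 1) * τ ^ (γ - 2) - γ * (γ - 1) * y ^ (γ - 2)| := by ring_nf
        _ ≤ M * |τ - y| := h1
        _ ≤ M * |t - y| := mul_le_mul_of_nonneg_left h2 hM
    have key := (convex_uIcc y t).norm_image_sub_le_of_norm_hasDerivWithin_le hder hbound
      Set.left_mem_uIcc Set.right_mem_uIcc
    rw [Real.norm_eq_abs, Real.norm_eq_abs] at key
    calc |γ * t ^ (γ - 1) - γ * y ^ (γ - 1) - γ * (γ - 1) * y ^ (γ - 2) * (t - y)|
        = |(γ * t ^ (γ - 1) - γ * (γ - 1) * y ^ (γ - 2) * t)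
            - (γ * y ^ (γ - 1) - γ * (γ - 1) * y ^ (γ - 2) * y)| := by ring_nf
      _ ≤ M * |t - y| * |t - y| := key
      _ = M * |t - y| ^ 2 := by ring
  -- Step 3: second-order Taylor for τ ↦ τ^γ
  intro x y hx hy
  have hsub : Set.uIcc y x ⊆ Set.Icc r₀ r₁ := Set.uIcc_subset_Icc hy hx
  have hder : ∀ τ ∈ Set.uIcc y x,
      HasDerivWithinAt
        (fun τ : ℝ => τ ^ γ - γ * y ^ (γ - 1) * τ - γ * (γ - 1) / 2 * y ^ (γ - 2) * (τ - y) ^ 2)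
        ((fun τ : ℝ => γ * τ ^ (γ - 1) - γ * y ^ (γ - 1)
            - γ * (γ - 1) * y ^ (γ - 2) * (τ - y)) τ)
        (Set.uIcc y x) τ := by
    intro τ hτ
    have h0 : τ ≠ 0 := ne_of_gt (lt_of_lt_of_le h₀ (hsub hτ).1)
    have h1 := Real.hasDerivAt_rpow_const (p := γ) (x := τ) (Or.inl h0)
    have h2 := (hasDerivAt_id τ).const_mul (γ * y ^ (γ - 1))
    have h3 : HasDerivAt (fun τ : ℝ => (τ - y) ^ 2) (2 * (τ - y)) τ := by
      have := ((hasDerivAt_id τ).sub_const y).pow 2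
      simpa [Pi.pow_def] using this
    have h4 := h3.const_mul (γ * (γ - 1) / 2 * y ^ (γ - 2))
    have h := ((h1.sub h2).sub h4).hasDerivWithinAt (s := Set.uIcc y x)
    simp only [mul_one] at h
    rw [show γ * (γ - 1) / 2 * y ^ (γ - 2) * (2 * (τ - y))
      = γ * (γ - 1) * y ^ (γ - 2) * (τ - y) by ring] at h
    exact h
  have hbound : ∀ τ ∈ Set.uIcc y x,
      ‖(fun τ : ℝ => γ * τ ^ (γ - 1) - γ * y ^ (γ - 1)
          - γ * (γ - 1) * y ^ (γ - 2) * (τ - y)) τ‖ ≤ M * |x - y| ^ 2 := by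
    intro τ hτ
    have h1 := step2 τ (hsub hτ) y hy
    have h2 : |τ - y| ≤ |x - y| := abs_sub_left_of_mem_uIcc hτ
    rw [Real.norm_eq_abs]
    calc |γ * τ ^ (γ - 1) - γ * y ^ (γ - 1) - γ * (γ - 1) * y ^ (γ - 2) * (τ - y)|
        ≤ M * |τ - y| ^ 2 := h1
      _ ≤ M * |x - y| ^ 2 :=
          mul_le_mul_of_nonneg_left (pow_le_pow_left₀ (abs_nonneg _) h2 2) hM
  have key := (convex_uIcc y x).norm_image_sub_le_of_norm_hasDerivWithin_le hder hbound
    Set.left_mem_uIcc Set.right_mem_uIcc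
  rw [Real.norm_eq_abs, Real.norm_eq_abs] at key
  calc |x ^ γ - y ^ γ - γ * y ^ (γ - 1) * (x - y) - γ * (γ - 1) / 2 * y ^ (γ - 2) * (x - y) ^ 2|
      = |(x ^ γ - γ * y ^ (γ - 1) * x - γ * (γ - 1) / 2 * y ^ (γ - 2) * (x - y) ^ 2)
          - (y ^ γ - γ * y ^ (γ - 1) * y - γ * (γ - 1) / 2 * y ^ (γ - 2) * (y - y) ^ 2)| := by
        ring_nf
    _ ≤ M * |x - y| ^ 2 * |x - y| := key
    _ = M * |x - y| ^ 3 := by ring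

/-- Pointwise maximization (completion of the square) underlying the a-contraction
estimate. -/
theorem maximization_inequality (γ : ℝ) (hγ : 1 < γ)
    (r₀ r₁ : ℝ) (h₀ : 0 < r₀) (h₁ : r₀ < r₁) :
    ∃ C : ℝ, 0 < C ∧ ∀ ρ ρt : ℝ, ρ ∈ Set.Icc r₀ r₁ → ρt ∈ Set.Icc r₀ r₁ →
      ∀ u ut s : ℝ, 0 < s →
        -s * (ρ ^ γ - ρt ^ γ - γ * ρt ^ (γ - 1) * (ρ - ρt)) / (γ - 1)
            + (ρ ^ γ - ρt ^ γ) * (u - ut)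
          ≤ -(s / 2) * (γ * ρt ^ (γ - 2)) * ((ρ - ρt) - (ρt / s) * (u - ut)) ^ 2
            + (γ * ρt ^ γ / (2 * s)) * (u - ut) ^ 2
            + C * |ρ - ρt| ^ 2 * |u - ut| + C * s * |ρ - ρt| ^ 3 := by
  obtain ⟨M, hM, hT⟩ := taylor2_aux γ r₀ r₁ hγ h₀
  have hg1 : (0:ℝ) < γ - 1 := by linarith
  set B : ℝ := max (r₀ ^ (γ - 2)) (r₁ ^ (γ - 2)) with hBdef
  have hB : 0 ≤ B := by
    rw [hBdef]; exact le_trans (Real.rpow_pos_of_pos h₀ (γ - 2)).le (le_max_left _ _)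
  set C : ℝ := γ * (γ - 1) / 2 * B + M * (r₁ - r₀) + M / (γ - 1) + 1 with hCdef
  clear_value B C
  have hγγ : 0 < γ * (γ - 1) := by nlinarith
  have hC : 0 < C := by
    have k1 : 0 ≤ M * (r₁ - r₀) := mul_nonneg hM (by linarith)
    have k2 : 0 ≤ M / (γ - 1) := div_nonneg hM hg1.le
    have k3 : 0 ≤ γ * (γ - 1) / 2 * B := mul_nonneg (by linarith) hB
    rw [hCdef]; linarith
  refine ⟨C, hC, ?_⟩
  intro ρ ρt hρ hρt u ut s hs
  have hρt0 : 0 < ρt := lt_of_lt_of_le h₀ hρt.1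
  set a : ℝ := ρ - ρt with hadef
  set v : ℝ := u - ut with hvdef
  set X : ℝ := ρt ^ (γ - 2) with hXdef
  set P : ℝ := ρ ^ γ - ρt ^ γ - γ * ρt ^ (γ - 1) * a with hPdef
  have hXB : X ≤ B := by rw [hXdef, hBdef]; exact rpow_le_max_aux h₀ (γ - 2) hρt
  have hX0 : 0 ≤ X := by rw [hXdef]; exact Real.rpow_nonneg hρt0.le _
  clear_value a v X P
  have hPQ : |P - γ * (γ - 1) / 2 * X * a ^ 2| ≤ M * |a| ^ 3 := by
    have h := hT ρ ρt hρ hρt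
    have harg : P - γ * (γ - 1) / 2 * X * a ^ 2
        = ρ ^ γ - ρt ^ γ - γ * ρt ^ (γ - 1) * (ρ - ρt)
          - γ * (γ - 1) / 2 * ρt ^ (γ - 2) * (ρ - ρt) ^ 2 := by
      rw [hPdef, hXdef, hadef]
    rw [harg, hadef]
    exact h
  have ha : |a| ≤ r₁ - r₀ := by
    rw [abs_le]; constructor <;> [nlinarith [hρ.1, hρt.2]; nlinarith [hρ.2, hρt.1]]
  -- key algebraic identity for the completed square
  have e1 : ρt ^ (γ - 1) = X * ρt := by
    rw [hXdef, show γ - 1 = (γ - 2) + 1 by ring, Real.rpow_add_one hρt0.ne']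
  have e2 : ρt ^ γ = X * ρt ^ (2:ℕ) := by
    rw [hXdef, ← Real.rpow_natCast ρt 2, ← Real.rpow_add hρt0]
    norm_num
  have key : -(s / 2) * (γ * X) * (a - (ρt / s) * v) ^ 2 + (γ * (X * ρt ^ (2:ℕ)) / (2 * s)) * v ^ 2
      = -(s / 2) * (γ * X) * a ^ 2 + γ * (X * ρt) * (a * v) := by
    field_simp
    ring
  -- division estimate
  have hdiv : -s * P / (γ - 1) ≤ -(s / 2) * (γ * X) * a ^ 2 + C * (s * |a| ^ 3) := by
    rw [div_le_iff₀ hg1]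
    have h1 : γ * (γ - 1) / 2 * X * a ^ 2 - P ≤ M * |a| ^ 3 := by
      have := (abs_le.mp hPQ).1; linarith
    have h2 : M ≤ C * (γ - 1) := by
      have hA1 : 0 ≤ γ * (γ - 1) / 2 * B := by linarith [mul_nonneg hγγ.le hB]
      have hA2 : 0 ≤ M * (r₁ - r₀) := mul_nonneg hM (by linarith)
      have hCg : C * (γ - 1) = (γ * (γ - 1) / 2 * B + M * (r₁ - r₀) + 1) * (γ - 1) + M := by
        rw [hCdef]; field_simp; ring
      have hnn : 0 ≤ (γ * (γ - 1) / 2 * B + M * (r₁ - r₀) + 1) * (γ - 1) :=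
        mul_nonneg (by linarith) hg1.le
      linarith [hCg]
    have h3 : (0:ℝ) ≤ s * |a| ^ 3 := by positivity
    linarith [mul_le_mul_of_nonneg_left h1 hs.le, mul_nonneg (sub_nonneg.mpr h2) h3]
  -- transversal estimate
  have hPv : P * v ≤ C * (a ^ 2 * |v|) := by
    have hPabs : |P| ≤ γ * (γ - 1) / 2 * X * a ^ 2 + M * |a| ^ 3 := by
      have h := abs_sub_abs_le_abs_sub P (γ * (γ - 1) / 2 * X * a ^ 2)
      have hQnn : |γ * (γ - 1) / 2 * X * a ^ 2| = γ * (γ - 1) / 2 * X * a ^ 2 := by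
        exact abs_of_nonneg (mul_nonneg (mul_nonneg (by linarith) hX0) (sq_nonneg a))
      linarith [hPQ]
    have h1 : P * v ≤ |P| * |v| := by
      calc P * v ≤ |P * v| := le_abs_self _
        _ = |P| * |v| := abs_mul _ _
    have h2 : |a| ^ 3 = a ^ 2 * |a| := by
      rw [show (3:ℕ) = 2 + 1 by norm_num, pow_succ, sq_abs]
    have hv0 : 0 ≤ |v| := abs_nonneg _
    have hPle : |P| ≤ (γ * (γ - 1) / 2 * B + M * (r₁ - r₀)) * a ^ 2 := by
      rw [h2] at hPabs
      have t1 : γ * (γ - 1) / 2 * X * a ^ 2 ≤ γ * (γ - 1) / 2 * B * a ^ 2 := by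
        linarith [mul_nonneg (mul_nonneg hγγ.le (sub_nonneg.mpr hXB)) (sq_nonneg a)]
      have t2 : M * (a ^ 2 * |a|) ≤ M * (r₁ - r₀) * a ^ 2 := by
        linarith [mul_nonneg (mul_nonneg hM (sub_nonneg.mpr ha)) (sq_nonneg a)]
      linarith
    have hcC : γ * (γ - 1) / 2 * B + M * (r₁ - r₀) ≤ C := by
      rw [hCdef]
      have : 0 ≤ M / (γ - 1) := div_nonneg hM hg1.le
      linarith
    calc P * v ≤ |P| * |v| := h1
      _ ≤ ((γ * (γ - 1) / 2 * B + M * (r₁ - r₀)) * a ^ 2) * |v| :=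
          mul_le_mul_of_nonneg_right hPle hv0
      _ = (γ * (γ - 1) / 2 * B + M * (r₁ - r₀)) * (a ^ 2 * |v|) := by ring
      _ ≤ C * (a ^ 2 * |v|) := mul_le_mul_of_nonneg_right hcC (by positivity)
  -- assemble
  have hrw : ρ ^ γ - ρt ^ γ = P + γ * ρt ^ (γ - 1) * a := by rw [hPdef]; ring
  rw [sq_abs]
  calc -s * P / (γ - 1) + (ρ ^ γ - ρt ^ γ) * v
      = -s * P / (γ - 1) + P * v + γ * (X * ρt) * (a * v) := by rw [hrw, e1]; ring
    _ ≤ (-(s / 2) * (γ * X) * a ^ 2 + C * (s * |a| ^ 3)) + C * (a ^ 2 * |v|)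
        + γ * (X * ρt) * (a * v) := by linarith
    _ = -(s / 2) * (γ * X) * (a - ρt / s * v) ^ 2 + (γ * (X * ρt ^ (2:ℕ)) / (2 * s)) * v ^ 2
        + C * a ^ 2 * |v| + C * s * |a| ^ 3 := by rw [key]; ring
    _ = -(s / 2) * (γ * X) * (a - ρt / s * v) ^ 2
        + γ * ρt ^ γ / (2 * s) * v ^ 2 + C * a ^ 2 * |v| + C * s * |a| ^ 3 := by
        rw [e2]
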